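/- Let n be a positive integer and r ≥ β ≥ 0 real numbers such that N = 2^{nr}, M = 2^{n(r−β)}, and L = 2^{2nβ} are positive integers with M ≤ N. Let ℳ̃ and ℳ be finite sets with |ℳ̃| = M and |ℳ| = N, and let G₁, …, G_L be independent random variables, each uniformly distributed over the set of injective maps from ℳ̃ to ℳ. Then Pr( there exists m ∈ ℳ with |{ j ∈ {1,…,L} : m ∈ range(G_j) }| > 2^{1+nβ} ) ≤ 2^{nr}·e^{−(2 ln 2 − 1)·2^{nβ}}. -/

import Mathlib

open scoped BigOperators Classical

noncomputable section
open Finset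

lemma countA {Mt Mc : Type} [Fintype Mt] [Fintype Mc] (m : Mc) :
    (univ.filter (fun g : Mt ↪ Mc => m ∈ Set.range g)).card * Fintype.card Mc
      = Fintype.card (Mt ↪ Mc) * Fintype.card Mt := by
  classical
  have hconst : ∀ m m' : Mc,
      (univ.filter (fun g : Mt ↪ Mc => m ∈ Set.range g)).card
        = (univ.filter (fun g : Mt ↪ Mc => m' ∈ Set.range g)).card := by
    intro m m'
    refine Finset.card_bij' (fun g _ => g.trans (Equiv.swap m m').toEmbedding)
      (fun g _ => g.trans (Equiv.swap m m').toEmbedding) ?_ ?_ ?_ ?_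
    · intro g hg
      simp only [mem_filter, mem_univ, true_and] at hg ⊢
      obtain ⟨t, ht⟩ := hg
      exact ⟨t, by simp [Function.Embedding.trans_apply, ht]⟩
    · intro g hg
      simp only [mem_filter, mem_univ, true_and] at hg ⊢
      obtain ⟨t, ht⟩ := hg
      exact ⟨t, by simp [Function.Embedding.trans_apply, ht]⟩
    · intro g _; ext t; simp [Function.Embedding.trans_apply]
    · intro g _; ext t; simp [Function.Embedding.trans_apply]
  have hsum : ∑ m' : Mc, (univ.filter (fun g : Mt ↪ Mc => m' ∈ Set.range g)).card
      = Fintype.card (Mt ↪ Mc) * Fintype.card Mt := by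
    have : ∀ g : Mt ↪ Mc,
        (univ.filter (fun m' : Mc => m' ∈ Set.range g)).card = Fintype.card Mt := by
      intro g
      have : (univ.filter (fun m' : Mc => m' ∈ Set.range g)) = univ.image g := by
        ext x; simp [Set.mem_range, eq_comm]
      rw [this, Finset.card_image_of_injective _ g.injective, Finset.card_univ]
    simp only [Finset.card_filter]
    rw [Finset.sum_comm]
    simp only [← Finset.card_filter, this, Finset.sum_const, Finset.card_univ, smul_eq_mul]
  calc (univ.filter (fun g : Mt ↪ Mc => m ∈ Set.range g)).card * Fintype.card Mc
      = ∑ m' : Mc, (univ.filter (fun g : Mt ↪ Mc => m' ∈ Set.range g)).card := by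
        rw [Finset.sum_congr rfl (fun m' _ => (hconst m' m))]
        simp [Finset.sum_const, Finset.card_univ, mul_comm]
    _ = _ := hsum

/-- Appendix `app:sims:gdagger`: for independent uniformly random
injections `G₁, …, G_L : ℳ̃ ↪ ℳ` with `|ℳ̃| = M = 2^{n(r−β)}`, `|ℳ| = N = 2^{nr}`,
and `L = 2^{2nβ}`, the probability (under the uniform distribution on tuples of
injections) that some `m ∈ ℳ` lies in more than `2^{1+nβ}` of the ranges is at
most `2^{nr}·e^{−(2 ln 2 − 1)·2^{nβ}}`. -/
theorem statement19 (n : ℕ) (hn : 0 < n) (r β : ℝ) (hβ : 0 ≤ β) (hrβ : β ≤ r)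
    (N M L : ℕ)
    (hN : (N : ℝ) = (2 : ℝ) ^ ((n : ℝ) * r))
    (hM : (M : ℝ) = (2 : ℝ) ^ ((n : ℝ) * (r - β)))
    (hL : (L : ℝ) = (2 : ℝ) ^ (2 * (n : ℝ) * β))
    (hMN : M ≤ N)
    {Mt Mc : Type} [Fintype Mt] [Fintype Mc]
    (hcardMt : Fintype.card Mt = M) (hcardMc : Fintype.card Mc = N) :
    (Nat.card {G : Fin L → (Mt ↪ Mc) //
        ∃ m : Mc, (2 : ℝ) ^ (1 + (n : ℝ) * β) <
          (Nat.card {j : Fin L // m ∈ Set.range (G j)} : ℝ)} : ℝ)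
      / (Nat.card (Fin L → (Mt ↪ Mc)))
      ≤ (2 : ℝ) ^ ((n : ℝ) * r) *
          Real.exp (-(2 * Real.log 2 - 1) * (2 : ℝ) ^ ((n : ℝ) * β)) := by
  classical
  set b : ℝ := (2 : ℝ) ^ ((n : ℝ) * β) with hb
  have hbpos : 0 < b := Real.rpow_pos_of_pos two_pos _
  set t : ℝ := (2 : ℝ) ^ (1 + (n : ℝ) * β) with ht
  have ht2 : t = 2 * b := by
    rw [ht, hb, Real.rpow_add two_pos, Real.rpow_one]
  set T : ℕ := Fintype.card (Mt ↪ Mc) with hT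
  have hTpos : 0 < T := by
    rw [hT, Fintype.card_embedding_eq, hcardMt, hcardMc]
    exact Nat.pos_of_ne_zero fun h =>
      absurd (Nat.descFactorial_eq_zero_iff_lt.mp h) (not_lt.mpr hMN)
  have hNpos : (0:ℝ) < (N:ℝ) := hN ▸ Real.rpow_pos_of_pos two_pos _
  have hTR : (0:ℝ) < (T:ℝ) := Nat.cast_pos.mpr hTpos
  -- the per-m count
  set A : Mc → ℕ := fun m => (univ.filter (fun g : Mt ↪ Mc => m ∈ Set.range g)).card with hA
  have hAeq : ∀ m : Mc, (A m : ℝ) = (T:ℝ) * ((M:ℝ) / (N:ℝ)) := by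
    intro m
    have := countA (Mt := Mt) (Mc := Mc) m
    rw [hcardMt, hcardMc] at this
    have : ((A m : ℝ)) * (N:ℝ) = (T:ℝ) * (M:ℝ) := by exact_mod_cast congrArg Nat.cast this
    field_simp
    linarith [this]
  -- denominator
  have hden : (Nat.card (Fin L → (Mt ↪ Mc)) : ℝ) = (T:ℝ) ^ L := by
    rw [Nat.card_eq_fintype_card, Fintype.card_fun, Fintype.card_fin]
    push_cast; rfl
  -- the bad sets
  set Badm : Mc → Finset (Fin L → (Mt ↪ Mc)) := fun m =>
    univ.filter (fun G => t < ((univ.filter (fun j : Fin L => m ∈ Set.range (G j))).card : ℝ))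
    with hBadm
  have hnum : (Nat.card {G : Fin L → (Mt ↪ Mc) //
      ∃ m : Mc, t < (Nat.card {j : Fin L // m ∈ Set.range (G j)} : ℝ)} : ℝ)
      ≤ ∑ m : Mc, ((Badm m).card : ℝ) := by
    have hcard : ∀ (G : Fin L → (Mt ↪ Mc)) (m : Mc),
        Nat.card {j : Fin L // m ∈ Set.range (G j)}
          = (univ.filter (fun j : Fin L => m ∈ Set.range (G j))).card := by
      intro G m
      rw [Nat.card_eq_fintype_card]
      convert Fintype.card_subtype _
    have : (Nat.card {G : Fin L → (Mt ↪ Mc) //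
        ∃ m : Mc, t < (Nat.card {j : Fin L // m ∈ Set.range (G j)} : ℝ)})
        = (univ.filter (fun G : Fin L → (Mt ↪ Mc) =>
            ∃ m : Mc, t < (Nat.card {j : Fin L // m ∈ Set.range (G j)} : ℝ))).card := by
      rw [Nat.card_eq_fintype_card]
      convert Fintype.card_subtype _
    rw [this]
    have hsub : (univ.filter (fun G : Fin L → (Mt ↪ Mc) =>
            ∃ m : Mc, t < (Nat.card {j : Fin L // m ∈ Set.range (G j)} : ℝ)))
        ⊆ univ.biUnion (fun m : Mc => Badm m) := by
      intro G hG
      simp only [mem_filter, mem_univ, true_and] at hG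
      obtain ⟨m, hm⟩ := hG
      refine Finset.mem_biUnion.mpr ⟨m, mem_univ _, ?_⟩
      rw [hBadm]
      simp only [mem_filter, mem_univ, true_and]
      rw [hcard G m] at hm
      exact hm
    calc ((univ.filter _).card : ℝ) ≤ ((univ.biUnion (fun m : Mc => Badm m)).card : ℝ) := by
          exact_mod_cast Finset.card_le_card hsub
      _ ≤ ∑ m : Mc, ((Badm m).card : ℝ) := by
          exact_mod_cast Finset.card_biUnion_le
  -- Chernoff bound for each m
  have hcher : ∀ m : Mc, ((Badm m).card : ℝ) * (2:ℝ) ^ t ≤ ((T:ℝ) + (A m : ℝ)) ^ L := by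
    intro m
    set f : (Mt ↪ Mc) → ℝ := fun g => if m ∈ Set.range g then 2 else 1 with hf
    have hf1 : ∀ g, (1:ℝ) ≤ f g := by
      intro g; rw [hf]; dsimp only; split <;> norm_num
    have hsumf : ∑ g : Mt ↪ Mc, f g = (T:ℝ) + (A m : ℝ) := by
      have : ∀ g : Mt ↪ Mc, f g = 1 + (if m ∈ Set.range g then (1:ℝ) else 0) := by
        intro g; rw [hf]; dsimp only; split <;> norm_num
      rw [Finset.sum_congr rfl (fun g _ => this g)]
      rw [Finset.sum_add_distrib, Finset.sum_const, Finset.sum_boole, Finset.card_univ]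
      simp [hA, hT]
    have hprodf : ∀ G : Fin L → (Mt ↪ Mc),
        ∏ j, f (G j) = (2:ℝ) ^ ((univ.filter (fun j : Fin L => m ∈ Set.range (G j))).card) := by
      intro G
      rw [hf]
      rw [Finset.prod_ite, Finset.prod_const, Finset.prod_const, one_pow, mul_one]
    have step1 : ((Badm m).card : ℝ) * (2:ℝ) ^ t ≤ ∑ G ∈ Badm m, ∏ j, f (G j) := by
      have h := Finset.card_nsmul_le_sum (Badm m) (fun G => ∏ j, f (G j)) ((2:ℝ)^t) ?_
      · rwa [nsmul_eq_mul] at h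
      intro G hG
      rw [hBadm] at hG
      simp only [mem_filter, mem_univ, true_and] at hG
      rw [hprodf G]
      have : (2:ℝ) ^ t ≤ (2:ℝ) ^ (((univ.filter (fun j : Fin L => m ∈ Set.range (G j))).card : ℕ) : ℝ) :=
        Real.rpow_le_rpow_of_exponent_le one_le_two (le_of_lt hG)
      rwa [Real.rpow_natCast] at this
    have step2 : ∑ G ∈ Badm m, ∏ j, f (G j) ≤ ∑ G : Fin L → (Mt ↪ Mc), ∏ j, f (G j) := by
      refine Finset.sum_le_sum_of_subset_of_nonneg (Finset.subset_univ _) ?_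
      intro G _ _
      exact Finset.prod_nonneg fun j _ => le_trans zero_le_one (hf1 _)
    have step3 : ∑ G : Fin L → (Mt ↪ Mc), ∏ j, f (G j) = ((T:ℝ) + (A m : ℝ)) ^ L := by
      rw [← hsumf, Fintype.sum_pow f L]
    linarith [step1, step2, step3.ge, step3.le]
  -- putting together
  have hLp : (L:ℝ) * ((M:ℝ)/(N:ℝ)) = b := by
    rw [hL, hM, hN, hb, ← Real.rpow_sub two_pos, ← Real.rpow_add two_pos]
    ring_nf
  have h2t : (0:ℝ) < (2:ℝ) ^ t := Real.rpow_pos_of_pos two_pos _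
  have hbound : ∀ m : Mc, ((Badm m).card : ℝ) ≤ (T:ℝ)^L * Real.exp b / (2:ℝ)^t := by
    intro m
    rw [le_div_iff₀ h2t]
    calc ((Badm m).card : ℝ) * (2:ℝ)^t ≤ ((T:ℝ) + (A m : ℝ)) ^ L := hcher m
      _ = (T:ℝ)^L * (1 + (M:ℝ)/(N:ℝ))^L := by
          rw [hAeq m, ← mul_pow]; ring_nf
      _ ≤ (T:ℝ)^L * Real.exp ((M:ℝ)/(N:ℝ))^L := by
          refine mul_le_mul_of_nonneg_left (pow_le_pow_left₀ (by positivity)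
            (by linarith [Real.add_one_le_exp ((M:ℝ)/(N:ℝ))]) L) (by positivity)
      _ = (T:ℝ)^L * Real.exp ((L:ℝ) * ((M:ℝ)/(N:ℝ))) := by
          rw [← Real.exp_nat_mul]
      _ = (T:ℝ)^L * Real.exp b := by rw [hLp]
  have hfinal : ∑ m : Mc, ((Badm m).card : ℝ) ≤ (N:ℝ) * ((T:ℝ)^L * Real.exp b / (2:ℝ)^t) := by
    calc ∑ m : Mc, ((Badm m).card : ℝ) ≤ ∑ _m : Mc, (T:ℝ)^L * Real.exp b / (2:ℝ)^t :=
          Finset.sum_le_sum fun m _ => hbound m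
      _ = (N:ℝ) * ((T:ℝ)^L * Real.exp b / (2:ℝ)^t) := by
          rw [Finset.sum_const, Finset.card_univ, hcardMc, nsmul_eq_mul]
  have hTL : (0:ℝ) < (T:ℝ)^L := by positivity
  rw [hden, div_le_iff₀ hTL]
  calc (Nat.card {G : Fin L → (Mt ↪ Mc) //
        ∃ m : Mc, (2 : ℝ) ^ (1 + (n : ℝ) * β) <
          (Nat.card {j : Fin L // m ∈ Set.range (G j)} : ℝ)} : ℝ)
      ≤ ∑ m : Mc, ((Badm m).card : ℝ) := hnum
    _ ≤ (N:ℝ) * ((T:ℝ)^L * Real.exp b / (2:ℝ)^t) := hfinal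
    _ = (2:ℝ) ^ ((n:ℝ)*r) * Real.exp (-(2 * Real.log 2 - 1) * b) * (T:ℝ)^L := by
        rw [hN]
        have h2tb : (2:ℝ)^t = Real.exp (2 * b * Real.log 2) := by
          rw [Real.rpow_def_of_pos two_pos, ht2]; ring_nf
        rw [h2tb, mul_div_assoc, ← Real.exp_sub]
        have harg : b - 2 * b * Real.log 2 = -(2 * Real.log 2 - 1) * b := by ring
        rw [harg]; ring
    _ = _ := by ring
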